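/- Let g ∈ GL_n(E) be non-critical of type S₀. Then Σ_{u ∈ W_n^{S₀}} ( Ad_{[u]⁻¹}(𝔭_{S₀(u)}) ∩ Ad_g(𝔟) ) = Ad_g(𝔟), as subspaces of M_n(E). (This is the paper's 'infinite fern' proposition for the semistable case: the sum over all refinements u of the parabolic deformation directions fills out the full space of Hodge-filtration-preserving endomorphisms.) -/

import Mathlib

/-!
Statement 5: the "infinite fern" proposition for the semistable case:
`Σ_{u ∈ W_n^{S₀}} ( Ad_{[u]⁻¹}(𝔭_{S₀(u)}) ∩ Ad_g(𝔟) ) = Ad_g(𝔟)`.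
All indexing is 0-based.
-/

open scoped Classical

noncomputable section

namespace Stmt5

/-- The permutation matrix `[u]`, characterized by `[u] · eⱼ = e_{u j}`. -/
def permMat (E : Type*) [Field E] {n : ℕ} (u : Equiv.Perm (Fin n)) :
    Matrix (Fin n) (Fin n) E :=
  Matrix.of fun i j => if i = u j then 1 else 0

/-- The antidiagonal permutation matrix `w₀`. -/
def w0Mat (E : Type*) [Field E] (n : ℕ) : Matrix (Fin n) (Fin n) E :=
  Matrix.of fun i j => if (i : ℕ) + (j : ℕ) + 1 = n then 1 else 0

variable {E : Type*} [Field E]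

/-- Membership in the Borel subgroup `B` of invertible upper triangular matrices. -/
def IsBorel {n : ℕ} (b : Matrix (Fin n) (Fin n) E) : Prop :=
  IsUnit b ∧ ∀ i j : Fin n, j < i → b i j = 0

/-- Membership in the big Bruhat cell `B w₀ B`. -/
def InBigCell {n : ℕ} (g : Matrix (Fin n) (Fin n) E) : Prop :=
  ∃ b b' : Matrix (Fin n) (Fin n) E, IsBorel b ∧ IsBorel b' ∧ g = b * w0Mat E n * b'

/-- `u ∈ W_n^{S₀}` (0-based). -/
def WminRep {n : ℕ} (S0 : Set ℕ) (u : Equiv.Perm (Fin n)) : Prop :=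
  ∀ i j : Fin n, (j : ℕ) = (i : ℕ) + 1 → (i : ℕ) ∈ S0 → u i < u j

/-- `g ∈ GL_n(E)` is non-critical of type `S₀`. -/
def NonCritical {n : ℕ} (S0 : Set ℕ) (g : Matrix (Fin n) (Fin n) E) : Prop :=
  IsUnit g ∧ ∀ u : Equiv.Perm (Fin n), WminRep S0 u → InBigCell (permMat E u * g)

/-- The set `S₀(u)` (0-based). -/
def S0ofu {n : ℕ} (S0 : Set ℕ) (u : Equiv.Perm (Fin n)) : Set ℕ :=
  { i | ∃ a b : Fin n, (a : ℕ) = i ∧ (b : ℕ) = i + 1 ∧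
      (u.symm b : ℕ) = (u.symm a : ℕ) + 1 ∧ ((u.symm a : ℕ) ∈ S0) }

/-- `p` and `q` lie in the same `J`-block. -/
def SameBlock {n : ℕ} (J : Set ℕ) (p q : Fin n) : Prop :=
  ∀ k : ℕ, min (p : ℕ) (q : ℕ) ≤ k → k < max (p : ℕ) (q : ℕ) → k ∈ J

/-- `Ad_h(V) = { h X h⁻¹ : X ∈ V }`. -/
def AdSet {n : ℕ} (h : Matrix (Fin n) (Fin n) E)
    (V : Set (Matrix (Fin n) (Fin n) E)) : Set (Matrix (Fin n) (Fin n) E) :=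
  (fun x => h * x * h⁻¹) '' V

/-- The Borel subalgebra `𝔟` of upper triangular matrices. -/
def bSet (E : Type*) [Field E] (n : ℕ) : Set (Matrix (Fin n) (Fin n) E) :=
  { x | ∀ i j : Fin n, j < i → x i j = 0 }

/-- The Levi subalgebra `𝔩_J` of block-diagonal matrices. -/
def lSetJ (E : Type*) [Field E] {n : ℕ} (J : Set ℕ) : Set (Matrix (Fin n) (Fin n) E) :=
  { x | ∀ p q : Fin n, ¬ SameBlock J p q → x p q = 0 }

/-- The nilpotent radical `𝔫_J` of strictly block-upper-triangular matrices. -/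
def nSetJ (E : Type*) [Field E] {n : ℕ} (J : Set ℕ) : Set (Matrix (Fin n) (Fin n) E) :=
  { x | ∀ p q : Fin n, ¬ ((p : ℕ) < (q : ℕ) ∧ ¬ SameBlock J p q) → x p q = 0 }

/-- The parabolic subalgebra `𝔭_J = 𝔩_J + 𝔫_J`. -/
def pSetJ (E : Type*) [Field E] {n : ℕ} (J : Set ℕ) : Set (Matrix (Fin n) (Fin n) E) :=
  { x | ∃ a ∈ lSetJ E J, ∃ b ∈ nSetJ E J, x = a + b }

/-! ### Auxiliary development -/

section Aux

variable {n : ℕ}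

/-- Lower triangular matrices. -/
def lowSet (E : Type*) [Field E] (n : ℕ) : Set (Matrix (Fin n) (Fin n) E) :=
  { x | ∀ i j : Fin n, i < j → x i j = 0 }

/-! #### Permutation matrices -/

theorem permMat_mul_apply (u : Equiv.Perm (Fin n)) (X : Matrix (Fin n) (Fin n) E)
    (i j : Fin n) : (permMat E u * X) i j = X (u.symm i) j := by
  rw [Matrix.mul_apply]
  rw [Finset.sum_eq_single (u.symm i)]
  · simp [permMat]
  · intro k _ hk
    have : ¬ i = u k := by
      intro h
      exact hk (by simp [h])
    simp [permMat, this]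
  · simp

theorem mul_permMat_apply (u : Equiv.Perm (Fin n)) (X : Matrix (Fin n) (Fin n) E)
    (i j : Fin n) : (X * permMat E u) i j = X i (u j) := by
  rw [Matrix.mul_apply]
  rw [Finset.sum_eq_single (u j)]
  · simp [permMat]
  · intro k _ hk
    simp [permMat, hk]
  · simp

theorem permMat_mul (u v : Equiv.Perm (Fin n)) :
    permMat E (u * v) = permMat E u * permMat E v := by
  ext i j
  rw [permMat_mul_apply]
  simp only [permMat, Matrix.of_apply, Equiv.Perm.coe_mul, Function.comp_apply]
  by_cases h : i = u (v j)
  · simp [h]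
  · simp [h, Equiv.symm_apply_eq]

theorem permMat_one : permMat E (1 : Equiv.Perm (Fin n)) = 1 := by
  ext i j
  simp only [permMat, Matrix.one_apply, Matrix.of_apply, Equiv.Perm.one_apply]
  split_ifs <;> simp_all [eq_comm]

theorem permMat_mul_inv (u : Equiv.Perm (Fin n)) :
    permMat E u * permMat E u⁻¹ = 1 := by
  rw [← permMat_mul, mul_inv_cancel, permMat_one]

theorem isUnit_permMat (u : Equiv.Perm (Fin n)) : IsUnit (permMat E u) :=
  (Matrix.isUnit_iff_isUnit_det _).mpr (Matrix.isUnit_det_of_right_inverse (permMat_mul_inv u))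

theorem permMat_inv (u : Equiv.Perm (Fin n)) :
    (permMat E u)⁻¹ = permMat E u⁻¹ :=
  Matrix.inv_eq_right_inv (permMat_mul_inv u)

theorem w0Mat_eq : w0Mat E n = permMat E (Fin.revPerm) := by
  ext i j
  simp only [w0Mat, permMat, Matrix.of_apply, Fin.revPerm_apply]
  by_cases h : (i : ℕ) + (j : ℕ) + 1 = n
  · rw [if_pos h, if_pos]
    apply Fin.ext
    rw [Fin.val_rev]
    omega
  · rw [if_neg h, if_neg]
    intro hc
    apply h
    have := congrArg Fin.val hc
    rw [Fin.val_rev] at this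
    have hj : (j : ℕ) < n := j.2
    omega

theorem w0Mat_mul_self : w0Mat E n * w0Mat E n = 1 := by
  rw [w0Mat_eq, ← permMat_mul]
  have : (Fin.revPerm : Equiv.Perm (Fin n)) * Fin.revPerm = 1 := by
    ext x
    simp
  rw [this, permMat_one]

theorem isUnit_w0Mat : IsUnit (w0Mat E n) :=
  (Matrix.isUnit_iff_isUnit_det _).mpr (Matrix.isUnit_det_of_right_inverse w0Mat_mul_self)

theorem w0Mat_inv : (w0Mat E n)⁻¹ = w0Mat E n :=
  Matrix.inv_eq_right_inv w0Mat_mul_self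

theorem w0_conj_apply (x : Matrix (Fin n) (Fin n) E) (i j : Fin n) :
    (w0Mat E n * x * w0Mat E n) i j = x (Fin.rev i) (Fin.rev j) := by
  rw [w0Mat_eq, mul_permMat_apply, permMat_mul_apply]
  simp

/-! #### Triangular matrices -/

theorem bSet_blockTriangular {x : Matrix (Fin n) (Fin n) E} (hx : x ∈ bSet E n) :
    x.BlockTriangular id := fun _ _ h => hx _ _ h

theorem lowSet_blockTriangular {x : Matrix (Fin n) (Fin n) E} (hx : x ∈ lowSet E n) :
    x.BlockTriangular OrderDual.toDual := fun _ _ h => hx _ _ h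

theorem bSet_one : (1 : Matrix (Fin n) (Fin n) E) ∈ bSet E n := by
  intro i j h
  exact Matrix.one_apply_ne (ne_of_gt h)

theorem bSet_mul {x y : Matrix (Fin n) (Fin n) E} (hx : x ∈ bSet E n) (hy : y ∈ bSet E n) :
    x * y ∈ bSet E n := by
  intro i j h
  rw [Matrix.mul_apply]
  apply Finset.sum_eq_zero
  intro k _
  by_cases hk : k < i
  · rw [hx i k hk, zero_mul]
  · have : j < k := lt_of_lt_of_le h (not_lt.mp hk)
    rw [hy k j this, mul_zero]

theorem lowSet_mul {x y : Matrix (Fin n) (Fin n) E} (hx : x ∈ lowSet E n)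
    (hy : y ∈ lowSet E n) : x * y ∈ lowSet E n := by
  intro i j h
  rw [Matrix.mul_apply]
  apply Finset.sum_eq_zero
  intro k _
  by_cases hk : i < k
  · rw [hx i k hk, zero_mul]
  · have : k < j := lt_of_le_of_lt (not_lt.mp hk) h
    rw [hy k j this, mul_zero]

theorem bSet_inv {x : Matrix (Fin n) (Fin n) E} (hx : x ∈ bSet E n) (hu : IsUnit x) :
    x⁻¹ ∈ bSet E n := by
  have hdet : IsUnit x.det := (Matrix.isUnit_iff_isUnit_det x).mp hu
  have : Invertible x := x.invertibleOfIsUnitDet hdet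
  exact fun i j h => Matrix.blockTriangular_inv_of_blockTriangular (bSet_blockTriangular hx) h

theorem lowSet_inv {x : Matrix (Fin n) (Fin n) E} (hx : x ∈ lowSet E n) (hu : IsUnit x) :
    x⁻¹ ∈ lowSet E n := by
  have hdet : IsUnit x.det := (Matrix.isUnit_iff_isUnit_det x).mp hu
  have : Invertible x := x.invertibleOfIsUnitDet hdet
  exact fun i j h =>
    Matrix.blockTriangular_inv_of_blockTriangular (lowSet_blockTriangular hx) h

theorem bSet_diag_ne_zero {x : Matrix (Fin n) (Fin n) E} (hx : x ∈ bSet E n)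
    (hu : IsUnit x) (i : Fin n) : x i i ≠ 0 := by
  have hdet : x.det ≠ 0 := by
    have := (Matrix.isUnit_iff_isUnit_det x).mp hu
    exact this.ne_zero
  rw [Matrix.det_of_upperTriangular (bSet_blockTriangular hx)] at hdet
  intro h
  exact hdet (Finset.prod_eq_zero (Finset.mem_univ i) h)

theorem lowSet_diag_ne_zero {x : Matrix (Fin n) (Fin n) E} (hx : x ∈ lowSet E n)
    (hu : IsUnit x) (i : Fin n) : x i i ≠ 0 := by
  have hdet : x.det ≠ 0 := by
    have := (Matrix.isUnit_iff_isUnit_det x).mp hu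
    exact this.ne_zero
  rw [Matrix.det_of_lowerTriangular x (lowSet_blockTriangular hx)] at hdet
  intro h
  exact hdet (Finset.prod_eq_zero (Finset.mem_univ i) h)

theorem bSet_w0_conj {x : Matrix (Fin n) (Fin n) E} (hx : x ∈ bSet E n) :
    w0Mat E n * x * w0Mat E n ∈ lowSet E n := by
  intro i j h
  rw [w0_conj_apply]
  apply hx
  simp only [Fin.lt_def, Fin.val_rev]
  have hi : (i : ℕ) < n := i.2
  have hj : (j : ℕ) < n := j.2
  have h' : (i : ℕ) < j := h
  omega

theorem lowSet_w0_conj {x : Matrix (Fin n) (Fin n) E} (hx : x ∈ lowSet E n) :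
    w0Mat E n * x * w0Mat E n ∈ bSet E n := by
  intro i j h
  rw [w0_conj_apply]
  apply hx
  simp only [Fin.lt_def, Fin.val_rev]
  have hi : (i : ℕ) < n := i.2
  have hj : (j : ℕ) < n := j.2
  have h' : (j : ℕ) < i := h
  omega

/-! #### Blocks and parabolics -/

theorem sameBlock_refl (J : Set ℕ) (p : Fin n) : SameBlock J p p := by
  intro k h1 h2
  simp at h1 h2
  omega

theorem sameBlock_def {J : Set ℕ} {p q : Fin n} (h : (q : ℕ) ≤ (p : ℕ)) :
    SameBlock J p q ↔ ∀ k : ℕ, (q : ℕ) ≤ k → k < (p : ℕ) → k ∈ J := by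
  unfold SameBlock
  rw [min_eq_right h, max_eq_left h]

theorem mem_pSetJ_iff {J : Set ℕ} {x : Matrix (Fin n) (Fin n) E} :
    x ∈ pSetJ E J ↔ ∀ p q : Fin n, ¬ SameBlock J p q → (q : ℕ) < (p : ℕ) → x p q = 0 := by
  constructor
  · rintro ⟨a, ha, b, hb, rfl⟩ p q hsb hlt
    have h1 : a p q = 0 := ha p q hsb
    have h2 : b p q = 0 := hb p q (by push_neg; intro hc; omega)
    simp [Matrix.add_apply, h1, h2]
  · intro h
    refine ⟨fun p q => if SameBlock J p q then x p q else 0, ?_,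
      fun p q => if SameBlock J p q then 0 else x p q, ?_, ?_⟩
    · intro p q hsb
      simp [hsb]
    · intro p q hc
      push_neg at hc
      by_cases hsb : SameBlock J p q
      · simp [hsb]
      · simp only [hsb, if_neg, ite_false]
        rcases lt_trichotomy ((q : ℕ)) ((p : ℕ)) with hlt | heq | hgt
        · exact h p q hsb hlt
        · exact absurd (by have : p = q := Fin.ext heq.symm; rw [this]; exact sameBlock_refl J q) hsb
        · exact absurd (hc hgt) hsb
    · ext p q
      show x p q = (if SameBlock J p q then x p q else 0) + (if SameBlock J p q then 0 else x p q)
      by_cases hsb : SameBlock J p q <;> simp [hsb]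

theorem bSet_subset_pSetJ {J : Set ℕ} {x : Matrix (Fin n) (Fin n) E} (hx : x ∈ bSet E n) :
    x ∈ pSetJ E J := by
  rw [mem_pSetJ_iff]
  intro p q _ hlt
  exact hx p q hlt

theorem pSetJ_mul {J : Set ℕ} {x y : Matrix (Fin n) (Fin n) E} (hx : x ∈ pSetJ E J)
    (hy : y ∈ pSetJ E J) : x * y ∈ pSetJ E J := by
  rw [mem_pSetJ_iff] at hx hy ⊢
  intro p q hsb hlt
  rw [Matrix.mul_apply]
  apply Finset.sum_eq_zero
  intro r _
  by_cases hxz : x p r = 0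
  · rw [hxz, zero_mul]
  by_cases hyz : y r q = 0
  · rw [hyz, mul_zero]
  exfalso
  have hxr : (r : ℕ) < (p : ℕ) → SameBlock J p r := fun hlt' =>
    Classical.byContradiction fun hn => hxz (hx p r hn hlt')
  have hyr : (q : ℕ) < (r : ℕ) → SameBlock J r q := fun hlt' =>
    Classical.byContradiction fun hn => hyz (hy r q hn hlt')
  apply hsb
  rw [sameBlock_def (le_of_lt hlt)]
  intro k hk1 hk2
  rcases le_or_gt ((p : ℕ)) ((r : ℕ)) with hrp | hrp
  · -- r ≥ p > q, use SameBlock r q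
    have hsb2 : SameBlock J r q := hyr (by omega)
    rw [sameBlock_def (by omega)] at hsb2
    exact hsb2 k hk1 (by omega)
  · rcases le_or_gt ((r : ℕ)) ((q : ℕ)) with hrq | hrq
    · -- r ≤ q < p, use SameBlock p r
      have hsb1 : SameBlock J p r := hxr (by omega)
      rw [sameBlock_def (by omega)] at hsb1
      exact hsb1 k (by omega) hk2
    · -- q < r < p
      have hsb1 : SameBlock J p r := hxr (by omega)
      have hsb2 : SameBlock J r q := hyr (by omega)
      rw [sameBlock_def (by omega)] at hsb1
      rw [sameBlock_def (by omega)] at hsb2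
      rcases lt_or_ge k ((r : ℕ)) with hkr | hkr
      · exact hsb2 k hk1 hkr
      · exact hsb1 k hkr hk2

theorem pSetJ_add {J : Set ℕ} {x y : Matrix (Fin n) (Fin n) E} (hx : x ∈ pSetJ E J)
    (hy : y ∈ pSetJ E J) : x + y ∈ pSetJ E J := by
  rw [mem_pSetJ_iff] at hx hy ⊢
  intro p q h1 h2
  rw [Matrix.add_apply, hx p q h1 h2, hy p q h1 h2, add_zero]

theorem pSetJ_zero {J : Set ℕ} : (0 : Matrix (Fin n) (Fin n) E) ∈ pSetJ E J := by
  rw [mem_pSetJ_iff]; intro p q _ _; rfl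

theorem pSetJ_smul {J : Set ℕ} {x : Matrix (Fin n) (Fin n) E} (c : E) (hx : x ∈ pSetJ E J) :
    c • x ∈ pSetJ E J := by
  rw [mem_pSetJ_iff] at hx ⊢
  intro p q h1 h2
  rw [Matrix.smul_apply, hx p q h1 h2, smul_zero]

theorem stdBasis_mem_pSetJ {J : Set ℕ} {p q : Fin n} (hsb : SameBlock J p q) :
    Matrix.single p q (1 : E) ∈ pSetJ E J := by
  rw [mem_pSetJ_iff]
  intro i j hij _
  apply Matrix.single_apply_of_ne
  rintro ⟨rfl, rfl⟩
  exact hij hsb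

theorem stdBasis_mem_lowSet {p q : Fin n} (h : (q : ℕ) ≤ (p : ℕ)) :
    Matrix.single p q (1 : E) ∈ lowSet E n := by
  intro i j hij
  apply Matrix.single_apply_of_ne
  rintro ⟨rfl, rfl⟩
  exact absurd hij (by simp only [Fin.lt_def]; omega)

theorem bSet_add {x y : Matrix (Fin n) (Fin n) E} (hx : x ∈ bSet E n) (hy : y ∈ bSet E n) :
    x + y ∈ bSet E n := by
  intro i j h
  rw [Matrix.add_apply, hx i j h, hy i j h, add_zero]

theorem bSet_zero : (0 : Matrix (Fin n) (Fin n) E) ∈ bSet E n := fun _ _ _ => rfl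

theorem bSet_smul {x : Matrix (Fin n) (Fin n) E} (c : E) (hx : x ∈ bSet E n) :
    c • x ∈ bSet E n := by
  intro i j h
  rw [Matrix.smul_apply, hx i j h, smul_zero]


/-! #### Combinatorics of `W^{S₀}` -/

theorem mem_S0ofu_bound {S0 : Set ℕ} {u : Equiv.Perm (Fin n)} {i : ℕ}
    (h : i ∈ S0ofu S0 u) : i + 1 < n := by
  obtain ⟨a, b, ha, hb, _, _⟩ := h
  have := b.2
  omega

theorem mem_S0ofu_iff {S0 : Set ℕ} {u : Equiv.Perm (Fin n)} {i : ℕ}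
    (hi1 : i + 1 < n) :
    i ∈ S0ofu S0 u ↔
      ((u.symm ⟨i + 1, hi1⟩ : ℕ) = (u.symm ⟨i, by omega⟩ : ℕ) + 1 ∧
        ((u.symm ⟨i, by omega⟩ : ℕ) ∈ S0)) := by
  constructor
  · rintro ⟨a, b, ha, hb, h1, h2⟩
    have hin : i < n := by omega
    have hae : a = ⟨i, hin⟩ := Fin.ext ha
    have hbe : b = ⟨i + 1, hi1⟩ := Fin.ext hb
    subst hae
    subst hbe
    exact ⟨h1, h2⟩
  · rintro ⟨h1, h2⟩
    exact ⟨⟨i, by omega⟩, ⟨i + 1, hi1⟩, rfl, rfl, h1, h2⟩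

theorem swap_lt_swap {α β v w : Fin n} (hβ : (β : ℕ) = (α : ℕ) + 1) (hvw : v < w)
    (h : ¬(v = α ∧ w = β)) : Equiv.swap α β v < Equiv.swap α β w := by
  have hvw' : (v : ℕ) < (w : ℕ) := hvw
  rw [Fin.lt_def]
  by_cases hvα : v = α
  · by_cases hwβ : w = β
    · exact absurd ⟨hvα, hwβ⟩ h
    · have hwα : w ≠ α := by
        intro hc
        have h4 : (v : ℕ) = (α : ℕ) := congrArg Fin.val hvα
        have h5 : (w : ℕ) = (α : ℕ) := congrArg Fin.val hc
        omega
      rw [hvα, Equiv.swap_apply_left, Equiv.swap_apply_of_ne_of_ne hwα hwβ]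
      have h2 : (w : ℕ) ≠ (β : ℕ) := fun hc => hwβ (Fin.ext hc)
      have h3 : (v : ℕ) = (α : ℕ) := congrArg Fin.val hvα
      omega
  · by_cases hvβ : v = β
    · have h4 : (v : ℕ) = (β : ℕ) := congrArg Fin.val hvβ
      have hwα : w ≠ α := by
        intro hc
        have h5 : (w : ℕ) = (α : ℕ) := congrArg Fin.val hc
        omega
      have hwβ : w ≠ β := by
        intro hc
        have h5 : (w : ℕ) = (β : ℕ) := congrArg Fin.val hc
        omega
      rw [hvβ, Equiv.swap_apply_right, Equiv.swap_apply_of_ne_of_ne hwα hwβ]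
      omega
    · rw [Equiv.swap_apply_of_ne_of_ne hvα hvβ]
      by_cases hwα : w = α
      · rw [hwα, Equiv.swap_apply_left]
        have h4 : (w : ℕ) = (α : ℕ) := congrArg Fin.val hwα
        omega
      · by_cases hwβ : w = β
        · rw [hwβ, Equiv.swap_apply_right]
          have h4 : (w : ℕ) = (β : ℕ) := congrArg Fin.val hwβ
          have h5 : (v : ℕ) ≠ (α : ℕ) := fun hc => hvα (Fin.ext hc)
          omega
        · rw [Equiv.swap_apply_of_ne_of_ne hwα hwβ]
          exact hvw' 

theorem wmin_swap {S0 : Set ℕ} {u : Equiv.Perm (Fin n)} (hu : WminRep S0 u)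
    {a : ℕ} (ha : a + 1 < n) (hJ : a ∉ S0ofu S0 u) :
    WminRep S0 (Equiv.swap (⟨a, by omega⟩ : Fin n) ⟨a + 1, ha⟩ * u) := by
  intro i j hji hiS0
  have base : u i < u j := hu i j hji hiS0
  simp only [Equiv.Perm.coe_mul, Function.comp_apply]
  apply swap_lt_swap (by simp) base
  rintro ⟨h1, h2⟩
  apply hJ
  refine ⟨⟨a, by omega⟩, ⟨a + 1, ha⟩, rfl, rfl, ?_, ?_⟩
  · have e1 : u.symm ⟨a, by omega⟩ = i := by rw [← h1, Equiv.symm_apply_apply]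
    have e2 : u.symm ⟨a + 1, ha⟩ = j := by rw [← h2, Equiv.symm_apply_apply]
    rw [e1, e2, hji]
  · have e1 : u.symm ⟨a, by omega⟩ = i := by rw [← h1, Equiv.symm_apply_apply]
    rw [e1]; exact hiS0

theorem swap_mul_symm_apply {u : Equiv.Perm (Fin n)} (α β x : Fin n) :
    (Equiv.swap α β * u).symm x = u.symm (Equiv.swap α β x) := by
  simp [Equiv.Perm.mul_def, Equiv.symm_trans_apply]

/-- moving past a gap at `r` destroys the bond at `r - 1`. -/
theorem J_break {S0 : Set ℕ} {u : Equiv.Perm (Fin n)} {s r : ℕ} (hr1 : r + 1 < n)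
    (hsr : r = s + 1) (hsJ : s ∈ S0ofu S0 u) :
    s ∉ S0ofu S0 (Equiv.swap (⟨r, by omega⟩ : Fin n) ⟨r + 1, hr1⟩ * u) := by
  intro hs'
  have hs1 : s + 1 < n := by omega
  rw [mem_S0ofu_iff hs1] at hsJ hs'
  set α : Fin n := ⟨r, by omega⟩
  set β : Fin n := ⟨r + 1, hr1⟩
  have e1 : (Equiv.swap α β * u).symm ⟨s + 1, hs1⟩ = u.symm β := by
    rw [swap_mul_symm_apply]
    congr 1
    have : (⟨s + 1, hs1⟩ : Fin n) = α := Fin.ext (by simp [α]; omega)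
    rw [this, Equiv.swap_apply_left]
  have e2 : (Equiv.swap α β * u).symm ⟨s, by omega⟩ = u.symm ⟨s, by omega⟩ := by
    rw [swap_mul_symm_apply]
    congr 1
    apply Equiv.swap_apply_of_ne_of_ne
    · intro hc; have := congrArg Fin.val hc; simp [α] at this; omega
    · intro hc; have := congrArg Fin.val hc; simp [β] at this; omega
  rw [e1, e2] at hs'
  -- also u.symm ⟨s+1⟩ = u.symm α  (since  (⟨s+1⟩ : Fin n) = α)
  have e3 : (⟨s + 1, hs1⟩ : Fin n) = α := Fin.ext (by simp [α]; omega)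
  rw [e3] at hsJ
  -- hsJ : u.symm α = u.symm ⟨s⟩ + 1 ; hs' : u.symm β = u.symm ⟨s⟩ + 1
  have : u.symm β = u.symm α := by
    apply Fin.ext; omega
  have := u.symm.injective this
  have := congrArg Fin.val this
  simp [α, β] at this


/-! #### Structure of the connecting matrices -/

theorem diag_mul_std (d : Fin n → E) (p q : Fin n) (c : E) :
    Matrix.diagonal d * Matrix.single p q c = Matrix.single p q (d p * c) := by
  ext i j
  rw [Matrix.diagonal_mul]
  by_cases hp : p = i
  · subst hp
    by_cases hq : q = j
    · subst hq; simp
    · have h1 : Matrix.single p q c p j = 0 :=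
        Matrix.single_apply_of_ne _ _ _ _ _ (fun h => hq h.2)
      have h2 : Matrix.single p q (d p * c) p j = 0 :=
        Matrix.single_apply_of_ne _ _ _ _ _ (fun h => hq h.2)
      rw [h1, h2, mul_zero]
  · have h1 : Matrix.single p q c i j = 0 :=
      Matrix.single_apply_of_ne _ _ _ _ _ (fun h => hp h.1)
    have h2 : Matrix.single p q (d p * c) i j = 0 :=
      Matrix.single_apply_of_ne _ _ _ _ _ (fun h => hp h.1)
    rw [h1, h2, mul_zero]

theorem std_mul_diag (d : Fin n → E) (p q : Fin n) (c : E) :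
    Matrix.single p q c * Matrix.diagonal d = Matrix.single p q (c * d q) := by
  ext i j
  rw [Matrix.mul_diagonal]
  by_cases hp : p = i
  · subst hp
    by_cases hq : q = j
    · subst hq; simp
    · have h1 : Matrix.single p q c p j = 0 :=
        Matrix.single_apply_of_ne _ _ _ _ _ (fun h => hq h.2)
      have h2 : Matrix.single p q (c * d q) p j = 0 :=
        Matrix.single_apply_of_ne _ _ _ _ _ (fun h => hq h.2)
      rw [h1, h2, zero_mul]
  · have h1 : Matrix.single p q c i j = 0 :=
      Matrix.single_apply_of_ne _ _ _ _ _ (fun h => hp h.1)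
    have h2 : Matrix.single p q (c * d q) i j = 0 :=
      Matrix.single_apply_of_ne _ _ _ _ _ (fun h => hp h.1)
    rw [h1, h2, zero_mul]

theorem zeta_decomp {P Q M : Matrix (Fin n) (Fin n) E} {a : ℕ} (ha : a + 1 < n)
    (hP : P ∈ bSet E n) (hQ : Q ∈ bSet E n) (hPu : IsUnit P) (hQu : IsUnit Q)
    (hM : M = P * permMat E (Equiv.swap (⟨a, by omega⟩ : Fin n) ⟨a + 1, ha⟩) * Q)
    (hlow : M ∈ lowSet E n) (hMu : IsUnit M) :
    ∃ d : Fin n → E, ∃ γ : E, (∀ i, d i ≠ 0) ∧ γ ≠ 0 ∧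
      M = Matrix.diagonal d + γ • Matrix.single (⟨a + 1, ha⟩ : Fin n) ⟨a, by omega⟩ 1 := by
  set α : Fin n := ⟨a, by omega⟩ with hα
  set β : Fin n := ⟨a + 1, ha⟩ with hβ
  have hMapply : ∀ i j : Fin n, M i j = ∑ k, P i k * Q (Equiv.swap α β k) j := by
    intro i j
    rw [hM, Matrix.mul_assoc, Matrix.mul_apply]
    apply Finset.sum_congr rfl
    intro k _
    rw [permMat_mul_apply, Equiv.symm_swap]
  have key1 : ∀ i j : Fin n, (j : ℕ) < (i : ℕ) → ¬(i = β ∧ j = α) → M i j = 0 := by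
    intro i j hji hne
    rw [hMapply]
    apply Finset.sum_eq_zero
    intro k _
    by_cases hk1 : (k : ℕ) < (i : ℕ)
    · rw [hP i k hk1, zero_mul]
    · by_cases hk2 : (j : ℕ) < ((Equiv.swap α β k : Fin n) : ℕ)
      · rw [hQ _ j hk2, mul_zero]
      · exfalso
        push_neg at hk1 hk2
        -- (swap k) ≤ j < i ≤ k
        by_cases hkα : k = α
        · subst hkα
          rw [Equiv.swap_apply_left] at hk2
          simp only [hα, hβ] at hk1 hk2
          omega
        · by_cases hkβ : k = β
          · subst hkβ
            rw [Equiv.swap_apply_right] at hk2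
            apply hne
            constructor
            · apply Fin.ext
              simp only [hα, hβ] at hk1 hk2 ⊢
              omega
            · apply Fin.ext
              simp only [hα, hβ] at hk1 hk2 ⊢
              omega
          · rw [Equiv.swap_apply_of_ne_of_ne hkα hkβ] at hk2
            omega
  have key2 : M β α = P β β * Q α α := by
    rw [hMapply]
    rw [Finset.sum_eq_single β]
    · rw [Equiv.swap_apply_right]
    · intro k _ hk
      by_cases hk1 : (k : ℕ) < (β : ℕ)
      · rw [hP β k hk1, zero_mul]
      · have hkβ' : (k : ℕ) ≠ (β : ℕ) := fun hc => hk (Fin.ext hc)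
        have hkα : k ≠ α := by
          intro hc
          have := congrArg Fin.val hc
          simp only [hα, hβ] at this hk1 hkβ'
          omega
        rw [Equiv.swap_apply_of_ne_of_ne hkα (fun hc => hk hc)]
        have : (α : ℕ) < (k : ℕ) := by
          simp only [hα, hβ] at hk1 hkβ' ⊢
          omega
        rw [hQ k α this, mul_zero]
    · simp
  refine ⟨fun i => M i i, M β α, ?_, ?_, ?_⟩
  · exact lowSet_diag_ne_zero hlow hMu
  · rw [key2]
    exact mul_ne_zero (bSet_diag_ne_zero hP hPu β) (bSet_diag_ne_zero hQ hQu α)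
  · ext i j
    rw [Matrix.add_apply, Matrix.smul_apply]
    by_cases hij : i = j
    · subst hij
      rw [Matrix.diagonal_apply_eq]
      have : Matrix.single β α (1 : E) i i = 0 := by
        apply Matrix.single_apply_of_ne
        rintro ⟨h1, h2⟩
        have : (β : ℕ) = (α : ℕ) := by rw [h1, h2]
        simp only [hα, hβ] at this
        omega
      rw [this, smul_zero, add_zero]
    · rw [Matrix.diagonal_apply_ne _ hij, zero_add]
      by_cases hbα : i = β ∧ j = α
      · obtain ⟨rfl, rfl⟩ := hbα
        rw [Matrix.single_apply_same, smul_eq_mul, mul_one]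
      · have hstd : Matrix.single β α (1 : E) i j = 0 := by
          apply Matrix.single_apply_of_ne
          rintro ⟨rfl, rfl⟩
          exact hbα ⟨rfl, rfl⟩
        rw [hstd, smul_zero]
        rcases lt_trichotomy ((j : ℕ)) ((i : ℕ)) with hlt | heq | hgt
        · exact key1 i j hlt hbα
        · exact absurd (Fin.ext heq.symm) hij
        · exact hlow i j hgt

/-! #### The three conjugation identities -/

theorem keyD1 {d : Fin n → E} {γ : E} (hd : ∀ i, d i ≠ 0) {α β p q : Fin n}
    (hpα : p ≠ α) (hqβ : q ≠ β) :
    (Matrix.diagonal d + γ • Matrix.single β α 1) * Matrix.single p q 1 =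
      ((d p * (d q)⁻¹) • Matrix.single p q 1) *
        (Matrix.diagonal d + γ • Matrix.single β α 1) := by
  have m1 : ∀ c e : E, Matrix.single β α c * Matrix.single p q e = 0 :=
    fun c e => Matrix.single_mul_single_of_ne _ _ _ _ (Ne.symm hpα) _
  have m2 : ∀ c e : E, Matrix.single p q c * Matrix.single β α e = 0 :=
    fun c e => Matrix.single_mul_single_of_ne _ _ _ _ hqβ _
  simp only [Matrix.add_mul, Matrix.mul_add, Matrix.smul_mul, Matrix.mul_smul,
    diag_mul_std, std_mul_diag, m1, m2, smul_zero, add_zero,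
    Matrix.smul_single, smul_eq_mul, mul_one]
  congr 1
  field_simp [hd q]

theorem keyD2 {d : Fin n → E} {γ : E} (hd : ∀ i, d i ≠ 0) {α β q : Fin n}
    (hqβ : q ≠ β) :
    (Matrix.diagonal d + γ • Matrix.single β α 1) * Matrix.single α q 1 =
      ((d α * (d q)⁻¹) • Matrix.single α q 1 +
        (γ * (d q)⁻¹) • Matrix.single β q 1) *
        (Matrix.diagonal d + γ • Matrix.single β α 1) := by
  have m1 : ∀ c e : E, Matrix.single β α c * Matrix.single α q e =
      Matrix.single β q (c * e) :=
    fun c e => Matrix.single_mul_single_same _ _ _ _ _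
  have m2 : ∀ c e : E, Matrix.single α q c * Matrix.single β α e = 0 :=
    fun c e => Matrix.single_mul_single_of_ne _ _ _ _ hqβ _
  have m3 : ∀ c e : E, Matrix.single β q c * Matrix.single β α e = 0 :=
    fun c e => Matrix.single_mul_single_of_ne _ _ _ _ hqβ _
  simp only [Matrix.add_mul, Matrix.mul_add, Matrix.smul_mul, Matrix.mul_smul,
    diag_mul_std, std_mul_diag, m1, m2, m3, smul_zero, add_zero,
    Matrix.smul_single, smul_eq_mul, mul_one]
  congr 1
  · congr 1
    field_simp [hd q]
  · congr 1
    field_simp [hd q]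

theorem keyD3 {d : Fin n → E} {γ : E} (hd : ∀ i, d i ≠ 0) {α β p : Fin n}
    (hαβ : α ≠ β) (hpα : p ≠ α) :
    (Matrix.diagonal d + γ • Matrix.single β α 1) * Matrix.single p β 1 =
      ((d p * (d β)⁻¹) • Matrix.single p β 1 +
        (-(γ * (d p * ((d β)⁻¹ * (d α)⁻¹)))) • Matrix.single p α 1) *
        (Matrix.diagonal d + γ • Matrix.single β α 1) := by
  have m1 : ∀ c e : E, Matrix.single β α c * Matrix.single p β e = 0 :=
    fun c e => Matrix.single_mul_single_of_ne _ _ _ _ (Ne.symm hpα) _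
  have m2 : ∀ c e : E, Matrix.single p β c * Matrix.single β α e =
      Matrix.single p α (c * e) :=
    fun c e => Matrix.single_mul_single_same _ _ _ _ _
  have m3 : ∀ c e : E, Matrix.single p α c * Matrix.single β α e = 0 :=
    fun c e => Matrix.single_mul_single_of_ne _ _ _ _ hαβ _
  simp only [Matrix.add_mul, Matrix.mul_add, Matrix.smul_mul, Matrix.mul_smul,
    diag_mul_std, std_mul_diag, m1, m2, m3, smul_zero, add_zero,
    Matrix.smul_single, smul_eq_mul, mul_one]
  have e1 : d p * (d β)⁻¹ * d β = d p := by
    field_simp [hd β]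
  have e2 : -(γ * (d p * ((d β)⁻¹ * (d α)⁻¹))) * d α + d p * (d β)⁻¹ * γ = 0 := by
    field_simp [hd α, hd β]
    ring
  rw [e1, add_assoc, ← Matrix.single_add, e2, Matrix.single_zero, add_zero]

theorem conj_transport {κ κ' ζ X Y : Matrix (Fin n) (Fin n) E} (hζu : IsUnit ζ)
    (hκ : κ' = κ * ζ) (hXY : ζ * Y = X * ζ) : κ' * Y * κ'⁻¹ = κ * X * κ⁻¹ := by
  have hζdet : IsUnit ζ.det := (Matrix.isUnit_iff_isUnit_det ζ).mp hζu
  subst hκ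
  rw [Matrix.mul_inv_rev]
  calc κ * ζ * Y * (ζ⁻¹ * κ⁻¹) = κ * (ζ * Y * ζ⁻¹) * κ⁻¹ := by
        simp only [Matrix.mul_assoc]
    _ = κ * (X * (ζ * ζ⁻¹)) * κ⁻¹ := by rw [hXY]; simp only [Matrix.mul_assoc]
    _ = κ * X * κ⁻¹ := by rw [Matrix.mul_nonsing_inv _ hζdet, Matrix.mul_one]

theorem conj_linear2 (κ κi Y₁ Y₂ : Matrix (Fin n) (Fin n) E) (c₁ c₂ : E) :
    κ * (c₁ • Y₁ + c₂ • Y₂) * κi = c₁ • (κ * Y₁ * κi) + c₂ • (κ * Y₂ * κi) := by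
  rw [Matrix.mul_add, Matrix.add_mul, Matrix.mul_smul, Matrix.mul_smul, Matrix.smul_mul,
    Matrix.smul_mul]

theorem conj_linear1 (κ κi Y₁ : Matrix (Fin n) (Fin n) E) (c₁ : E) :
    κ * (c₁ • Y₁) * κi = c₁ • (κ * Y₁ * κi) := by
  rw [Matrix.mul_smul, Matrix.smul_mul]


/-! #### The three transport steps -/

theorem zeta_unit {κ1 κ2 ζ : Matrix (Fin n) (Fin n) E} (hζ : κ2 = κ1 * ζ)
    (h2 : IsUnit κ2) : IsUnit ζ := by
  have h2' := (Matrix.isUnit_iff_isUnit_det _).mp h2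
  rw [hζ, Matrix.det_mul] at h2'
  exact (Matrix.isUnit_iff_isUnit_det _).mpr (isUnit_of_mul_isUnit_right h2')

theorem stepA (T : Submodule E (Matrix (Fin n) (Fin n) E)) {κ1 κ2 : Matrix (Fin n) (Fin n) E}
    {α β p q : Fin n} (hβp : β = p) (hqβ : q ≠ β)
    {d : Fin n → E} {γ : E} (hd : ∀ i, d i ≠ 0) (hγ : γ ≠ 0)
    (hζ : κ2 = κ1 * (Matrix.diagonal d + γ • Matrix.single β α 1))
    (hκ2 : IsUnit κ2)
    (hIH1 : κ1 * Matrix.single α q 1 * κ1⁻¹ ∈ T)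
    (hIH2 : κ2 * Matrix.single α q 1 * κ2⁻¹ ∈ T) :
    κ1 * Matrix.single p q 1 * κ1⁻¹ ∈ T := by
  have hζu := zeta_unit hζ hκ2
  have htrans := conj_transport hζu hζ (keyD2 (γ := γ) hd hqβ)
  rw [htrans, conj_linear2] at hIH2
  have h3 := T.sub_mem hIH2 (T.smul_mem (d α * (d q)⁻¹) hIH1)
  rw [add_sub_cancel_left] at h3
  have h4 := T.smul_mem (γ * (d q)⁻¹)⁻¹ h3
  rw [smul_smul, inv_mul_cancel₀ (mul_ne_zero hγ (inv_ne_zero (hd q))), one_smul] at h4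
  rwa [hβp] at h4

theorem stepB (T : Submodule E (Matrix (Fin n) (Fin n) E)) {κ1 κ2 : Matrix (Fin n) (Fin n) E}
    {α β p q : Fin n} (hαq : α = q) (hpα : p ≠ α) (hαβ : α ≠ β)
    {d : Fin n → E} {γ : E} (hd : ∀ i, d i ≠ 0) (hγ : γ ≠ 0)
    (hζ : κ2 = κ1 * (Matrix.diagonal d + γ • Matrix.single β α 1))
    (hκ2 : IsUnit κ2)
    (hIH1 : κ1 * Matrix.single p β 1 * κ1⁻¹ ∈ T)
    (hIH2 : κ2 * Matrix.single p β 1 * κ2⁻¹ ∈ T) :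
    κ1 * Matrix.single p q 1 * κ1⁻¹ ∈ T := by
  have hζu := zeta_unit hζ hκ2
  have htrans := conj_transport hζu hζ (keyD3 (γ := γ) hd hαβ hpα)
  rw [htrans, conj_linear2] at hIH2
  have h3 := T.sub_mem hIH2 (T.smul_mem (d p * (d β)⁻¹) hIH1)
  rw [add_sub_cancel_left] at h3
  have hc : (-(γ * (d p * ((d β)⁻¹ * (d α)⁻¹)))) ≠ 0 := by
    apply neg_ne_zero.mpr
    exact mul_ne_zero hγ (mul_ne_zero (hd p)
      (mul_ne_zero (inv_ne_zero (hd β)) (inv_ne_zero (hd α))))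
  have h4 := T.smul_mem (-(γ * (d p * ((d β)⁻¹ * (d α)⁻¹))))⁻¹ h3
  rw [smul_smul, inv_mul_cancel₀ hc, one_smul] at h4
  rwa [hαq] at h4

theorem stepD (T : Submodule E (Matrix (Fin n) (Fin n) E)) {κ1 κ2 : Matrix (Fin n) (Fin n) E}
    {α β p q : Fin n} (hpα : p ≠ α) (hqβ : q ≠ β)
    {d : Fin n → E} {γ : E} (hd : ∀ i, d i ≠ 0)
    (hζ : κ2 = κ1 * (Matrix.diagonal d + γ • Matrix.single β α 1))
    (hκ2 : IsUnit κ2)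
    (hmem : κ2 * Matrix.single p q 1 * κ2⁻¹ ∈ T) :
    κ1 * Matrix.single p q 1 * κ1⁻¹ ∈ T := by
  have hζu := zeta_unit hζ hκ2
  have htrans := conj_transport hζu hζ (keyD1 (γ := γ) hd hpα hqβ)
  rw [htrans, conj_linear1] at hmem
  have h4 := T.smul_mem (d p * (d q)⁻¹)⁻¹ hmem
  rwa [smul_smul, inv_mul_cancel₀ (mul_ne_zero (hd p) (inv_ne_zero (hd q))), one_smul] at h4

/-! #### The core induction -/

theorem core (S0 : Set ℕ)
    (T : Submodule E (Matrix (Fin n) (Fin n) E))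
    (κ : Equiv.Perm (Fin n) → Matrix (Fin n) (Fin n) E)
    (hκu : ∀ u, WminRep S0 u → IsUnit (κ u))
    (hbase : ∀ u, WminRep S0 u → ∀ p q : Fin n, (q : ℕ) ≤ (p : ℕ) →
      SameBlock (S0ofu S0 u) p q → κ u * Matrix.single p q 1 * (κ u)⁻¹ ∈ T)
    (hadj : ∀ u, WminRep S0 u → ∀ a : ℕ, ∀ ha : a + 1 < n, a ∉ S0ofu S0 u →
      ∃ d : Fin n → E, ∃ γ : E, (∀ i, d i ≠ 0) ∧ γ ≠ 0 ∧
        κ (Equiv.swap (⟨a, by omega⟩ : Fin n) ⟨a + 1, ha⟩ * u) =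
          κ u * (Matrix.diagonal d + γ • Matrix.single (⟨a + 1, ha⟩ : Fin n) ⟨a, by omega⟩ 1)) :
    ∀ (k : ℕ) (p q : Fin n) (u : Equiv.Perm (Fin n)), WminRep S0 u →
      (p : ℕ) = (q : ℕ) + k → κ u * Matrix.single p q 1 * (κ u)⁻¹ ∈ T := by
  intro k
  induction k using Nat.strong_induction_on with
  | _ k IH =>
  intro p q u hu hpq
  rcases Nat.eq_zero_or_pos k with hk0 | hkpos
  · have hpq' : p = q := Fin.ext (by omega)
    subst hpq'
    exact hbase u hu p p le_rfl (sameBlock_refl _ p)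
  have hqp : (q : ℕ) < (p : ℕ) := by omega
  have hpn : (p : ℕ) < n := p.2
  -- Case A: the bond just below `p` is absent
  have caseA : ∀ v : Equiv.Perm (Fin n), WminRep S0 v → ((p : ℕ) - 1) ∉ S0ofu S0 v →
      κ v * Matrix.single p q 1 * (κ v)⁻¹ ∈ T := by
    intro v hv hnJ
    have ha : ((p : ℕ) - 1) + 1 < n := by omega
    obtain ⟨d, γ, hd, hγ, hζ⟩ := hadj v hv ((p : ℕ) - 1) ha hnJ
    have hv' : WminRep S0
        (Equiv.swap (⟨(p : ℕ) - 1, by omega⟩ : Fin n) ⟨(p : ℕ) - 1 + 1, ha⟩ * v) :=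
      wmin_swap hv ha hnJ
    refine stepA T ?_ ?_ hd hγ hζ (hκu _ hv') ?_ ?_
    · exact Fin.ext (show (p : ℕ) - 1 + 1 = (p : ℕ) by omega)
    · intro hc
      have := congrArg Fin.val hc
      simp only [] at this
      omega
    · exact IH (k - 1) (by omega) _ _ v hv (show (p : ℕ) - 1 = (q : ℕ) + (k - 1) by omega)
    · exact IH (k - 1) (by omega) _ _ _ hv' (show (p : ℕ) - 1 = (q : ℕ) + (k - 1) by omega)
  -- Case B: the bond just above `q` is absent
  have caseB : ∀ v : Equiv.Perm (Fin n), WminRep S0 v → ((q : ℕ)) ∉ S0ofu S0 v →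
      κ v * Matrix.single p q 1 * (κ v)⁻¹ ∈ T := by
    intro v hv hnJ
    have ha : (q : ℕ) + 1 < n := by omega
    obtain ⟨d, γ, hd, hγ, hζ⟩ := hadj v hv (q : ℕ) ha hnJ
    have hv' : WminRep S0 (Equiv.swap (⟨(q : ℕ), by omega⟩ : Fin n) ⟨(q : ℕ) + 1, ha⟩ * v) :=
      wmin_swap hv ha hnJ
    refine stepB T ?_ ?_ ?_ hd hγ hζ (hκu _ hv') ?_ ?_
    · exact Fin.ext rfl
    · intro hc
      have := congrArg Fin.val hc
      simp only [] at this
      omega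
    · intro hc
      have := congrArg Fin.val hc
      simp only [] at this
      omega
    · exact IH (k - 1) (by omega) _ _ v hv (show (p : ℕ) = ((q : ℕ) + 1) + (k - 1) by omega)
    · exact IH (k - 1) (by omega) _ _ _ hv' (show (p : ℕ) = ((q : ℕ) + 1) + (k - 1) by omega)
  -- Case D: pure transport across an interior gap
  have caseD : ∀ (r : ℕ) (hr : r + 1 < n) (v : Equiv.Perm (Fin n)), WminRep S0 v →
      r ∉ S0ofu S0 v → r ≠ (p : ℕ) → (q : ℕ) ≠ r + 1 →
      κ (Equiv.swap (⟨r, by omega⟩ : Fin n) ⟨r + 1, hr⟩ * v) * Matrix.single p q 1 *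
        (κ (Equiv.swap (⟨r, by omega⟩ : Fin n) ⟨r + 1, hr⟩ * v))⁻¹ ∈ T →
      κ v * Matrix.single p q 1 * (κ v)⁻¹ ∈ T := by
    intro r hr v hv hnJ hrp hqr hmem
    obtain ⟨d, γ, hd, hγ, hζ⟩ := hadj v hv r hr hnJ
    have hv' : WminRep S0 (Equiv.swap (⟨r, by omega⟩ : Fin n) ⟨r + 1, hr⟩ * v) :=
      wmin_swap hv hr hnJ
    refine stepD T ?_ ?_ hd hζ (hκu _ hv') hmem
    · intro hc
      have := congrArg Fin.val hc
      simp only [] at this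
      omega
    · intro hc
      have := congrArg Fin.val hc
      simp only [] at this
      omega
  -- Inner induction on the least gap
  have inner : ∀ (r : ℕ) (v : Equiv.Perm (Fin n)), WminRep S0 v → (q : ℕ) < r →
      r + 1 < (p : ℕ) → r ∉ S0ofu S0 v → (∀ s, (q : ℕ) < s → s < r → s ∈ S0ofu S0 v) →
      ((q : ℕ) ∈ S0ofu S0 v) → ((p : ℕ) - 1 ∈ S0ofu S0 v) →
      κ v * Matrix.single p q 1 * (κ v)⁻¹ ∈ T := by
    intro r
    induction r using Nat.strong_induction_on with
    | _ r IHr =>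
    intro v hv hqr hrp hrJ hmin hqJ hpJ
    have hr1 : r + 1 < n := by omega
    have hv' : WminRep S0 (Equiv.swap (⟨r, by omega⟩ : Fin n) ⟨r + 1, hr1⟩ * v) :=
      wmin_swap hv hr1 hrJ
    have hrm1 : (r - 1) ∈ S0ofu S0 v := by
      rcases Nat.lt_or_ge ((q : ℕ) + 1) r with h | h
      · exact hmin (r - 1) (by omega) (by omega)
      · have : r - 1 = (q : ℕ) := by omega
        rw [this]; exact hqJ
    have hbreak : (r - 1) ∉ S0ofu S0 (Equiv.swap (⟨r, by omega⟩ : Fin n) ⟨r + 1, hr1⟩ * v) :=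
      J_break hr1 (by omega) hrm1
    have hgoal' : κ (Equiv.swap (⟨r, by omega⟩ : Fin n) ⟨r + 1, hr1⟩ * v) *
        Matrix.single p q 1 *
        (κ (Equiv.swap (⟨r, by omega⟩ : Fin n) ⟨r + 1, hr1⟩ * v))⁻¹ ∈ T := by
      by_cases hA : ((p : ℕ) - 1) ∈ S0ofu S0 (Equiv.swap (⟨r, by omega⟩ : Fin n) ⟨r + 1, hr1⟩ * v)
      · by_cases hB : ((q : ℕ)) ∈ S0ofu S0 (Equiv.swap (⟨r, by omega⟩ : Fin n) ⟨r + 1, hr1⟩ * v)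
        · have hrq1 : (q : ℕ) < r - 1 := by
            rcases Nat.lt_or_ge ((q : ℕ)) (r - 1) with h | h
            · exact h
            · exfalso
              have : r - 1 = (q : ℕ) := by omega
              rw [this] at hbreak
              exact hbreak hB
          have hex : ∃ s, (q : ℕ) < s ∧
              s ∉ S0ofu S0 (Equiv.swap (⟨r, by omega⟩ : Fin n) ⟨r + 1, hr1⟩ * v) :=
            ⟨r - 1, hrq1, hbreak⟩
          obtain ⟨hf1, hf2⟩ := Nat.find_spec hex
          have hfle : Nat.find hex ≤ r - 1 := Nat.find_le ⟨hrq1, hbreak⟩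
          refine IHr (Nat.find hex) (by omega) _ hv' hf1 (by omega) hf2 ?_ hB hA
          intro s hs1 hs2
          by_contra hsJ
          exact (Nat.find_min hex hs2) ⟨hs1, hsJ⟩
        · exact caseB _ hv' hB
      · exact caseA _ hv' hA
    exact caseD r hr1 v hv hrJ (by omega) (by omega) hgoal'
  -- Main case split
  by_cases hsb : SameBlock (S0ofu S0 u) p q
  · exact hbase u hu p q (le_of_lt hqp) hsb
  by_cases hA : ((p : ℕ) - 1) ∈ S0ofu S0 u
  · by_cases hB : ((q : ℕ)) ∈ S0ofu S0 u
    · rw [sameBlock_def (le_of_lt hqp)] at hsb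
      push_neg at hsb
      obtain ⟨s, hs1, hs2, hs3⟩ := hsb
      have hqs : (q : ℕ) < s := by
        rcases Nat.eq_or_lt_of_le hs1 with h | h
        · exfalso; rw [← h] at hs3; exact hs3 hB
        · exact h
      have hsp : s + 1 < (p : ℕ) := by
        rcases Nat.lt_or_ge (s + 1) ((p : ℕ)) with h | h
        · exact h
        · exfalso
          have : s = (p : ℕ) - 1 := by omega
          rw [this] at hs3
          exact hs3 hA
      have hex : ∃ t, (q : ℕ) < t ∧ t ∉ S0ofu S0 u := ⟨s, hqs, hs3⟩
      obtain ⟨hr1, hr2⟩ := Nat.find_spec hex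
      have hfle : Nat.find hex ≤ s := Nat.find_le ⟨hqs, hs3⟩
      refine inner (Nat.find hex) u hu hr1 (by omega) hr2 ?_ hB hA
      intro t ht1 ht2
      by_contra htJ
      exact (Nat.find_min hex ht2) ⟨ht1, htJ⟩
    · exact caseB u hu hB
  · exact caseA u hu hA


/-! #### Assembly helpers -/

theorem detU {A : Matrix (Fin n) (Fin n) E} (h : IsUnit A) : IsUnit A.det :=
  (Matrix.isUnit_iff_isUnit_det A).mp h

theorem isUnit_inv {A : Matrix (Fin n) (Fin n) E} (h : IsUnit A) : IsUnit A⁻¹ :=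
  ⟨⟨A⁻¹, A, Matrix.nonsing_inv_mul A (detU h), Matrix.mul_nonsing_inv A (detU h)⟩, rfl⟩

theorem conj_factor (A B X : Matrix (Fin n) (Fin n) E) :
    (A * B) * X * (A * B)⁻¹ = A * (B * X * B⁻¹) * A⁻¹ := by
  rw [Matrix.mul_inv_rev]
  simp only [Matrix.mul_assoc]

theorem AdSet_zero_mem {h : Matrix (Fin n) (Fin n) E} {V : Set (Matrix (Fin n) (Fin n) E)}
    (h0 : (0 : Matrix (Fin n) (Fin n) E) ∈ V) : (0 : Matrix (Fin n) (Fin n) E) ∈ AdSet h V :=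
  ⟨0, h0, by show h * 0 * h⁻¹ = 0; rw [Matrix.mul_zero, Matrix.zero_mul]⟩

theorem AdSet_add_mem {h : Matrix (Fin n) (Fin n) E} {V : Set (Matrix (Fin n) (Fin n) E)}
    (hV : ∀ x ∈ V, ∀ y ∈ V, x + y ∈ V) {x y : Matrix (Fin n) (Fin n) E}
    (hx : x ∈ AdSet h V) (hy : y ∈ AdSet h V) : x + y ∈ AdSet h V := by
  obtain ⟨a, ha, rfl⟩ := hx
  obtain ⟨b, hb, rfl⟩ := hy
  refine ⟨a + b, hV a ha b hb, ?_⟩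
  show h * (a + b) * h⁻¹ = h * a * h⁻¹ + h * b * h⁻¹
  rw [Matrix.mul_add, Matrix.add_mul]

theorem AdSet_smul_mem {h : Matrix (Fin n) (Fin n) E} {V : Set (Matrix (Fin n) (Fin n) E)}
    (hV : ∀ (c : E), ∀ x ∈ V, c • x ∈ V) (c : E) {x : Matrix (Fin n) (Fin n) E}
    (hx : x ∈ AdSet h V) : c • x ∈ AdSet h V := by
  obtain ⟨a, ha, rfl⟩ := hx
  refine ⟨c • a, hV c a ha, ?_⟩
  show h * (c • a) * h⁻¹ = c • (h * a * h⁻¹)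
  rw [Matrix.mul_smul, Matrix.smul_mul]

/-- The left-hand side of the statement, as a submodule. -/
def TT (S0 : Set ℕ) (g : Matrix (Fin n) (Fin n) E) :
    Submodule E (Matrix (Fin n) (Fin n) E) where
  carrier := { Y : Matrix (Fin n) (Fin n) E |
        ∃ X : Equiv.Perm (Fin n) → Matrix (Fin n) (Fin n) E,
          (∀ u, WminRep S0 u →
            X u ∈ AdSet (permMat E u)⁻¹ (pSetJ E (S0ofu S0 u)) ∩ AdSet g (bSet E n)) ∧
          (∀ u, ¬ WminRep S0 u → X u = 0) ∧
          ∑ u : Equiv.Perm (Fin n), X u = Y }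
  zero_mem' := by
    refine ⟨0, fun u _ => ⟨AdSet_zero_mem pSetJ_zero, AdSet_zero_mem bSet_zero⟩,
      fun u _ => rfl, ?_⟩
    simp
  add_mem' := by
    rintro x y ⟨X, hX1, hX2, hX3⟩ ⟨X', hX1', hX2', hX3'⟩
    refine ⟨fun u => X u + X' u, fun u hu => ?_, fun u hu => ?_, ?_⟩
    · exact ⟨AdSet_add_mem (fun a ha b hb => pSetJ_add ha hb) (hX1 u hu).1 (hX1' u hu).1,
        AdSet_add_mem (fun a ha b hb => bSet_add ha hb) (hX1 u hu).2 (hX1' u hu).2⟩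
    · show X u + X' u = 0
      rw [hX2 u hu, hX2' u hu, add_zero]
    · rw [Finset.sum_add_distrib, hX3, hX3']
  smul_mem' := by
    rintro c x ⟨X, hX1, hX2, hX3⟩
    refine ⟨fun u => c • X u, fun u hu => ?_, fun u hu => ?_, ?_⟩
    · exact ⟨AdSet_smul_mem (fun e a ha => pSetJ_smul e ha) c (hX1 u hu).1,
        AdSet_smul_mem (fun e a ha => bSet_smul e ha) c (hX1 u hu).2⟩
    · show c • X u = 0
      rw [hX2 u hu, smul_zero]
    · rw [← Finset.smul_sum, hX3]

theorem mem_TT_single {S0 : Set ℕ} {g : Matrix (Fin n) (Fin n) E} {u : Equiv.Perm (Fin n)}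
    (hu : WminRep S0 u) {x : Matrix (Fin n) (Fin n) E}
    (hx : x ∈ AdSet (permMat E u)⁻¹ (pSetJ E (S0ofu S0 u)) ∩ AdSet g (bSet E n)) :
    x ∈ TT S0 g := by
  refine ⟨fun v => if v = u then x else 0, fun v hv => ?_, fun v hv => ?_, ?_⟩
  · show (if v = u then x else 0) ∈ _
    by_cases hvu : v = u
    · subst hvu
      rw [if_pos rfl]
      exact hx
    · rw [if_neg hvu]
      exact ⟨AdSet_zero_mem pSetJ_zero, AdSet_zero_mem bSet_zero⟩
  · show (if v = u then x else 0) = 0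
    rw [if_neg]
    intro hc
    subst hc
    exact hv hu
  · rw [Finset.sum_ite_eq' Finset.univ u (fun _ => x)]
    simp


theorem cancel_left_inv {A : Matrix (Fin n) (Fin n) E} (h : IsUnit A)
    (t : Matrix (Fin n) (Fin n) E) : A⁻¹ * (A * t) = t := by
  rw [← Matrix.mul_assoc, Matrix.nonsing_inv_mul _ (detU h), Matrix.one_mul]

theorem cancel_left_inv' {A : Matrix (Fin n) (Fin n) E} (h : IsUnit A)
    (t : Matrix (Fin n) (Fin n) E) : A * (A⁻¹ * t) = t := by
  rw [← Matrix.mul_assoc, Matrix.mul_nonsing_inv _ (detU h), Matrix.one_mul]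

theorem w0_cancel (t : Matrix (Fin n) (Fin n) E) :
    w0Mat E n * (w0Mat E n * t) = t := by
  rw [← Matrix.mul_assoc, w0Mat_mul_self, Matrix.one_mul]

theorem left_cancel {A X Y : Matrix (Fin n) (Fin n) E} (hA : IsUnit A)
    (h : A * X = A * Y) : X = Y := by
  have := congrArg (fun M => A⁻¹ * M) h
  simpa only [cancel_left_inv hA] using this

theorem conj_of_comm {A Y X : Matrix (Fin n) (Fin n) E} (hA : IsUnit A)
    (h : A * Y = X * A) : A * Y * A⁻¹ = X := by
  rw [h, Matrix.mul_assoc, Matrix.mul_nonsing_inv _ (detU hA), Matrix.mul_one]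

end Aux

/-- infinite fern.  For `g` non-critical of type `S₀`,
`Σ_{u ∈ W_n^{S₀}} ( Ad_{[u]⁻¹}(𝔭_{S₀(u)}) ∩ Ad_g(𝔟) ) = Ad_g(𝔟)` as subspaces of
`M_n(E)`; the left-hand side is written as the set of all sums of families
`(X_u)_{u ∈ W_n^{S₀}}` with `X_u ∈ Ad_{[u]⁻¹}(𝔭_{S₀(u)}) ∩ Ad_g(𝔟)`. -/
theorem statement5
    {n : ℕ} (S0 : Set ℕ) (hS0 : ∀ i ∈ S0, i + 1 < n)
    (g : Matrix (Fin n) (Fin n) E) (hg : NonCritical S0 g) :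
    { Y : Matrix (Fin n) (Fin n) E |
        ∃ X : Equiv.Perm (Fin n) → Matrix (Fin n) (Fin n) E,
          (∀ u, WminRep S0 u →
            X u ∈ AdSet (permMat E u)⁻¹ (pSetJ E (S0ofu S0 u)) ∩ AdSet g (bSet E n)) ∧
          (∀ u, ¬ WminRep S0 u → X u = 0) ∧
          ∑ u : Equiv.Perm (Fin n), X u = Y }
      = AdSet g (bSet E n) := by
  obtain ⟨hgu, hbig⟩ := hg
  have hbig' : ∀ u : Equiv.Perm (Fin n), WminRep S0 u →
      ∃ b b' : Matrix (Fin n) (Fin n) E, IsBorel b ∧ IsBorel b' ∧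
        permMat E u * g = b * w0Mat E n * b' := hbig
  choose bb bb' hbb hbb' hfact using hbig'
  set κ : Equiv.Perm (Fin n) → Matrix (Fin n) (Fin n) E :=
    fun u => if h : WminRep S0 u then g * (bb' u h)⁻¹ * (w0Mat E n)⁻¹ else 1 with hκdef
  have hκ_eq : ∀ u (h : WminRep S0 u), κ u = g * (bb' u h)⁻¹ * (w0Mat E n)⁻¹ := by
    intro u h
    simp only [hκdef, dif_pos h]
  have hκu : ∀ u, WminRep S0 u → IsUnit (κ u) := by
    intro u h
    rw [hκ_eq u h]
    exact (hgu.mul (isUnit_inv (hbb' u h).1)).mul (isUnit_inv isUnit_w0Mat)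
  have hPu : ∀ u (h : WminRep S0 u), permMat E u * κ u = bb u h := by
    intro u h
    rw [hκ_eq u h, w0Mat_inv, ← Matrix.mul_assoc, ← Matrix.mul_assoc, hfact u h]
    simp only [Matrix.mul_assoc]
    rw [cancel_left_inv' (hbb' u h).1, w0Mat_mul_self, Matrix.mul_one]
  have hκ2 : ∀ u (h : WminRep S0 u), κ u = (permMat E u)⁻¹ * bb u h := by
    intro u h
    rw [← hPu u h]
    exact (cancel_left_inv (isUnit_permMat u) (κ u)).symm
  -- the base rule
  have hbase : ∀ u, WminRep S0 u → ∀ p q : Fin n, (q : ℕ) ≤ (p : ℕ) →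
      SameBlock (S0ofu S0 u) p q →
      κ u * Matrix.single p q 1 * (κ u)⁻¹ ∈ TT S0 g := by
    intro u h p q hqp hsb
    apply mem_TT_single h
    constructor
    · refine ⟨bb u h * Matrix.single p q 1 * (bb u h)⁻¹, ?_, ?_⟩
      · exact pSetJ_mul (pSetJ_mul (bSet_subset_pSetJ (hbb u h).2) (stdBasis_mem_pSetJ hsb))
          (bSet_subset_pSetJ (bSet_inv (hbb u h).2 (hbb u h).1))
      · show (permMat E u)⁻¹ * (bb u h * Matrix.single p q 1 * (bb u h)⁻¹) *
          ((permMat E u)⁻¹)⁻¹ = κ u * Matrix.single p q 1 * (κ u)⁻¹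
        rw [← conj_factor, ← hκ2 u h]
    · refine ⟨(bb' u h)⁻¹ * (w0Mat E n * Matrix.single p q 1 * w0Mat E n) * bb' u h,
        ?_, ?_⟩
      · exact bSet_mul (bSet_mul (bSet_inv (hbb' u h).2 (hbb' u h).1)
          (lowSet_w0_conj (stdBasis_mem_lowSet hqp))) (hbb' u h).2
      · show g * ((bb' u h)⁻¹ * (w0Mat E n * Matrix.single p q 1 * w0Mat E n) *
          bb' u h) * g⁻¹ = κ u * Matrix.single p q 1 * (κ u)⁻¹
        conv_rhs => rw [hκ_eq u h, conj_factor, conj_factor]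
        rw [w0Mat_inv, w0Mat_inv, Matrix.nonsing_inv_nonsing_inv _ (detU (hbb' u h).1)]
  -- the adjacency rule
  have hadj : ∀ u, WminRep S0 u → ∀ a : ℕ, ∀ ha : a + 1 < n, a ∉ S0ofu S0 u →
      ∃ d : Fin n → E, ∃ γ : E, (∀ i, d i ≠ 0) ∧ γ ≠ 0 ∧
        κ (Equiv.swap (⟨a, by omega⟩ : Fin n) ⟨a + 1, ha⟩ * u) =
          κ u * (Matrix.diagonal d + γ •
            Matrix.single (⟨a + 1, ha⟩ : Fin n) ⟨a, by omega⟩ 1) := by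
    intro u h a ha hnJ
    have han : a < n := by omega
    have h' : WminRep S0 (Equiv.swap (⟨a, han⟩ : Fin n) ⟨a + 1, ha⟩ * u) :=
      wmin_swap h ha hnJ
    have hζdef : κ u * ((bb u h)⁻¹ * permMat E (Equiv.swap (⟨a, han⟩ : Fin n) ⟨a + 1, ha⟩) *
        bb _ h') = κ (Equiv.swap (⟨a, han⟩ : Fin n) ⟨a + 1, ha⟩ * u) := by
      rw [hκ2 u h, hκ2 _ h', permMat_inv, permMat_inv]
      have hperm : (Equiv.swap (⟨a, han⟩ : Fin n) ⟨a + 1, ha⟩ * u)⁻¹ =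
          u⁻¹ * Equiv.swap (⟨a, han⟩ : Fin n) ⟨a + 1, ha⟩ := by
        rw [mul_inv_rev, Equiv.swap_inv]
      rw [hperm, permMat_mul]
      simp only [Matrix.mul_assoc]
      rw [cancel_left_inv' (hbb u h).1]
    have hζeq2 : (bb u h)⁻¹ * permMat E (Equiv.swap (⟨a, han⟩ : Fin n) ⟨a + 1, ha⟩) *
        bb _ h' = w0Mat E n * (bb' u h * (bb' _ h')⁻¹) * w0Mat E n := by
      apply left_cancel (hκu u h)
      rw [hζdef]
      rw [hκ_eq _ h', hκ_eq u h, w0Mat_inv]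
      simp only [Matrix.mul_assoc]
      rw [w0_cancel, cancel_left_inv (hbb' u h).1]
    have hζlow : (bb u h)⁻¹ * permMat E (Equiv.swap (⟨a, han⟩ : Fin n) ⟨a + 1, ha⟩) *
        bb _ h' ∈ lowSet E n := by
      rw [hζeq2]
      exact bSet_w0_conj (bSet_mul (hbb' u h).2 (bSet_inv (hbb' _ h').2 (hbb' _ h').1))
    have hζu : IsUnit ((bb u h)⁻¹ * permMat E (Equiv.swap (⟨a, han⟩ : Fin n) ⟨a + 1, ha⟩) *
        bb _ h') := zeta_unit hζdef.symm (hκu _ h')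
    obtain ⟨d, γ, hd, hγ, hdecomp⟩ :=
      zeta_decomp (E := E) ha (bSet_inv (hbb u h).2 (hbb u h).1) (hbb _ h').2
        (isUnit_inv (hbb u h).1) (hbb _ h').1 rfl hζlow hζu
    refine ⟨d, γ, hd, hγ, ?_⟩
    rw [← hdecomp]
    exact hζdef.symm
  have hcore := core S0 (TT S0 g) κ hκu hbase hadj
  -- the set equality
  apply Set.Subset.antisymm
  · rintro Y ⟨X, hX1, hX2, rfl⟩
    apply Finset.sum_induction X (fun M => M ∈ AdSet g (bSet E n))
    · exact fun a b ha hb => AdSet_add_mem (fun x hx y hy => bSet_add hx hy) ha hb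
    · exact AdSet_zero_mem bSet_zero
    · intro u _
      by_cases hWu : WminRep S0 u
      · exact (hX1 u hWu).2
      · rw [hX2 u hWu]
        exact AdSet_zero_mem bSet_zero
  · rintro Y ⟨x, hx, rfl⟩
    have h1 : WminRep S0 (1 : Equiv.Perm (Fin n)) := by
      intro i j hji _
      show (1 : Equiv.Perm (Fin n)) i < (1 : Equiv.Perm (Fin n)) j
      simp only [Equiv.Perm.one_apply]
      exact Fin.lt_def.mpr (by omega)
    have hzlow : w0Mat E n * (bb' 1 h1 * x * (bb' 1 h1)⁻¹) * w0Mat E n ∈ lowSet E n :=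
      bSet_w0_conj (bSet_mul (bSet_mul (hbb' 1 h1).2 hx)
        (bSet_inv (hbb' 1 h1).2 (hbb' 1 h1).1))
    have hmul : κ 1 * (w0Mat E n * (bb' 1 h1 * x * (bb' 1 h1)⁻¹) * w0Mat E n) =
        (g * x * g⁻¹) * κ 1 := by
      rw [hκ_eq 1 h1, w0Mat_inv]
      simp only [Matrix.mul_assoc]
      rw [w0_cancel, cancel_left_inv (hbb' 1 h1).1, cancel_left_inv hgu]
    have hY : κ 1 * (w0Mat E n * (bb' 1 h1 * x * (bb' 1 h1)⁻¹) * w0Mat E n) * (κ 1)⁻¹ =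
        g * x * g⁻¹ := conj_of_comm (hκu 1 h1) hmul
    have hmem : κ 1 * (w0Mat E n * (bb' 1 h1 * x * (bb' 1 h1)⁻¹) * w0Mat E n) * (κ 1)⁻¹ ∈
        TT S0 g := by
      set z := w0Mat E n * (bb' 1 h1 * x * (bb' 1 h1)⁻¹) * w0Mat E n with hzdef
      have hz_expand : κ 1 * z * (κ 1)⁻¹ =
          ∑ i : Fin n, ∑ j : Fin n, κ 1 * Matrix.single i j (z i j) * (κ 1)⁻¹ := by
        conv_lhs => rw [Matrix.matrix_eq_sum_single z]
        simp only [Finset.mul_sum, Finset.sum_mul]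
      rw [hz_expand]
      apply Submodule.sum_mem
      intro i _
      apply Submodule.sum_mem
      intro j _
      have hstd : Matrix.single i j (z i j) = (z i j) • Matrix.single i j 1 := by
        rw [Matrix.smul_single, smul_eq_mul, mul_one]
      rw [hstd, conj_linear1]
      by_cases hij : (j : ℕ) ≤ (i : ℕ)
      · exact Submodule.smul_mem _ _ (hcore ((i : ℕ) - (j : ℕ)) i j 1 h1 (by omega))
      · have hz0 : z i j = 0 := hzlow i j (Fin.lt_def.mpr (by omega))
        rw [hz0, zero_smul]
        exact Submodule.zero_mem _
    show g * x * g⁻¹ ∈ _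
    rw [← hY]
    exact hmem


end Stmt5
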